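/- Let T = (V, A) be a polytree and I⁰, Iᵗ independent sets with |I⁰| = |Iᵗ| such that I⁰ is reconfigurable into Iᵗ. Define B as the set of arcs e = (u, v) such that w(e; I⁰, Iᵗ) = 1 and w(e'; I⁰, Iᵗ) = 0 for every arc e' ≠ e incident to u or v. Then in every reconfiguration sequence from I⁰ to Iᵗ, the set of arcs traversed by tokens that move exactly once is exactly B. Moreover, for every (u, v) ∈ B, u ∈ I⁰ \ Iᵗ and v ∈ Iᵗ \ I⁰. -/

import Mathlib

open scoped Classical

variable {V : Type*}

/-- The underlying undirected simple graph of a digraph given by its arc relation. -/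
def underlying (A : V → V → Prop) : SimpleGraph V := SimpleGraph.fromRel A

/-- A polytree: a loopless digraph without antiparallel arcs whose underlying graph is a tree. -/
def IsPolytree (A : V → V → Prop) : Prop :=
  (∀ v, ¬ A v v) ∧ (∀ u v, A u v → ¬ A v u) ∧ (underlying A).IsTree

/-- `x` lies in the weakly connected component of `T - (a,b)` containing the tail `a`. -/
def InCminus (A : V → V → Prop) (a b x : V) : Prop :=
  ((underlying A).deleteEdges {s(a, b)}).Reachable a x

/-- `w((a,b); X, Y) = |C⁻ ∩ X| - |C⁻ ∩ Y|`. -/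
noncomputable def wArc [Fintype V] [DecidableEq V] (A : V → V → Prop)
    (X Y : Finset V) (a b : V) : ℤ :=
  ((X.filter fun x => InCminus A a b x).card : ℤ) -
    ((Y.filter fun x => InCminus A a b x).card : ℤ)

/-- Independence in the underlying undirected graph. -/
def IndepF (A : V → V → Prop) (I : Finset V) : Prop :=
  ∀ u ∈ I, ∀ v ∈ I, ¬ (underlying A).Adj u v

/-- One token-sliding step along an arc, in its direction. -/
def IsStep [DecidableEq V] (A : V → V → Prop) (I J : Finset V) : Prop :=
  ∃ u v, A u v ∧ I \ J = {u} ∧ J \ I = {v}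

/-- A reconfiguration sequence of independent sets under directed token sliding. -/
def IsReconfSeq [DecidableEq V] (A : V → V → Prop) {ℓ : ℕ}
    (f : Fin (ℓ + 1) → Finset V) : Prop :=
  (∀ i, IndepF A (f i)) ∧ ∀ i : Fin ℓ, IsStep A (f i.castSucc) (f i.succ)

/-- `I` is reconfigurable into `J` under directed token sliding. -/
def Reconfigurable [DecidableEq V] (A : V → V → Prop) (I J : Finset V) : Prop :=
  ∃ (ℓ : ℕ) (f : Fin (ℓ + 1) → Finset V),
    IsReconfSeq A f ∧ f 0 = I ∧ f (Fin.last ℓ) = J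

/-- A directed path in the digraph `A`, given by its (distinct) vertices in order. -/
structure DirPath (A : V → V → Prop) where
  len : ℕ
  vtx : Fin (len + 1) → V
  inj : Function.Injective vtx
  arc : ∀ i : Fin len, A (vtx i.castSucc) (vtx i.succ)

namespace DirPath
variable {A : V → V → Prop}
/-- The source of a directed path. -/
def src (p : DirPath A) : V := p.vtx 0
/-- The sink of a directed path. -/
def snk (p : DirPath A) : V := p.vtx (Fin.last p.len)
/-- The second vertex `s'(P)` of a directed path. -/
def sndVtx (p : DirPath A) : V := p.vtx ⟨min 1 p.len, by omega⟩
/-- The second-to-last vertex `t'(P)` of a directed path. -/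
def penVtx (p : DirPath A) : V := p.vtx ⟨p.len - 1, by omega⟩
/-- `v` is a vertex of the path `p`. -/
def mem (p : DirPath A) (v : V) : Prop := ∃ i, p.vtx i = v
/-- `x` is an internal vertex of `p` (neither source nor sink). -/
def internal (p : DirPath A) (x : V) : Prop :=
  ∃ i : Fin (p.len + 1), p.vtx i = x ∧ i ≠ 0 ∧ i ≠ Fin.last p.len
end DirPath

/-- A directed path matching from `X` to `Y`: distinct sources forming `X`,
distinct sinks forming `Y`. -/
def IsDPM [DecidableEq V] {A : V → V → Prop} {k : ℕ}
    (X Y : Finset V) (P : Fin k → DirPath A) : Prop :=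
  (Function.Injective fun i => (P i).src) ∧ (Function.Injective fun i => (P i).snk) ∧
  (Finset.univ.image fun i => (P i).src) = X ∧ (Finset.univ.image fun i => (P i).snk) = Y

/-- The path-set conditions (P1)–(P4). -/
def PathSetConds [DecidableEq V] {A : V → V → Prop} {k : ℕ}
    (X Y : Finset V) (P : Fin k → DirPath A) : Prop :=
  (∀ i, 2 ≤ (P i).len) ∧ IsDPM X Y P ∧
  (∀ i j, i ≠ j → (P i).sndVtx ≠ (P j).sndVtx) ∧
  (∀ i j, i ≠ j → (P i).penVtx ≠ (P j).penVtx)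

/-- Length of the (unique, when it exists) directed path from `u` to `v`. -/
noncomputable def ddist (A : V → V → Prop) (u v : V) : ℕ :=
  sInf {n | ∃ p : DirPath A, p.src = u ∧ p.snk = v ∧ p.len = n}

/-- A biased path pair: a common internal vertex `x` with
`dist(s(p),x) > dist(s(q),x)` and `dist(x,t(p)) > dist(x,t(q))`. -/
def BiasedPair (A : V → V → Prop) (p q : DirPath A) : Prop :=
  ∃ x, p.internal x ∧ q.internal x ∧
    ddist A q.src x < ddist A p.src x ∧ ddist A x q.snk < ddist A x p.snk

/-- A rigid token: `v ∈ X ∩ Y` and all incident arcs have `w`-value `0`. -/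
def RigidTok [Fintype V] [DecidableEq V] (A : V → V → Prop) (X Y : Finset V) (v : V) : Prop :=
  v ∈ X ∧ v ∈ Y ∧ ∀ a b, A a b → (a = v ∨ b = v) → wArc A X Y a b = 0

/-- A blocking arc: `w((u,v)) = 1` and every other arc incident to `u` or `v`
has `w`-value `0`. -/
def BlockingArc [Fintype V] [DecidableEq V] (A : V → V → Prop) (X Y : Finset V)
    (u v : V) : Prop :=
  A u v ∧ wArc A X Y u v = 1 ∧
    ∀ a b, A a b → (a, b) ≠ (u, v) → (a = u ∨ b = u ∨ a = v ∨ b = v) →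
      wArc A X Y a b = 0

/-- A trajectory of a single token along a reconfiguration sequence. -/
def IsTrajectory [DecidableEq V] (A : V → V → Prop) {ℓ : ℕ}
    (f : Fin (ℓ + 1) → Finset V) (g : Fin (ℓ + 1) → V) : Prop :=
  (∀ i, g i ∈ f i) ∧ ∀ i : Fin ℓ,
    g i.succ = g i.castSucc ∨
      (f i.castSucc \ f i.succ = {g i.castSucc} ∧ f i.succ \ f i.castSucc = {g i.succ})

/-- Number of steps of a reconfiguration sequence sliding a token from `u` to `v`. -/
noncomputable def movesAlong [DecidableEq V] {ℓ : ℕ} (f : Fin (ℓ + 1) → Finset V)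
    (u v : V) : ℕ :=
  (Finset.univ.filter fun i : Fin ℓ =>
    f i.castSucc \ f i.succ = {u} ∧ f i.succ \ f i.castSucc = {v}).card

/-- Number of forward arc traversals of a walk with vertex list `l`. -/
noncomputable def fwdCount (A : V → V → Prop) (l : List V) : ℕ :=
  (l.zip l.tail).countP fun p => decide (A p.1 p.2)

/-- Number of reverse arc traversals of a walk with vertex list `l`. -/
noncomputable def revCount (A : V → V → Prop) (l : List V) : ℕ :=
  (l.zip l.tail).countP fun p => decide (A p.2 p.1)

/-- Number of traversals of the ordered pair `(a, b)` by a walk with vertex list `l`. -/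
def traverseCount [DecidableEq V] (l : List V) (a b : V) : ℕ :=
  (l.zip l.tail).count (a, b)

/-- A vertex `v` touches a directed path `p` if `N[v]` meets the vertex set of `p`. -/
def Touches (A : V → V → Prop) (v : V) (p : DirPath A) : Prop :=
  ∃ u, p.mem u ∧ (u = v ∨ (underlying A).Adj v u)

/-- Independence in an undirected graph (for undirected token sliding). -/
def UIndep (G : SimpleGraph V) (I : Finset V) : Prop :=
  ∀ u ∈ I, ∀ v ∈ I, ¬ G.Adj u v

/-- One undirected token-sliding step along an edge. -/
def UIsStep [DecidableEq V] (G : SimpleGraph V) (I J : Finset V) : Prop :=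
  ∃ u v, G.Adj u v ∧ I \ J = {u} ∧ J \ I = {v}

/-- Reconfigurability under (undirected) token sliding. -/
def UReconfigurable [DecidableEq V] (G : SimpleGraph V) (I J : Finset V) : Prop :=
  ∃ (ℓ : ℕ) (f : Fin (ℓ + 1) → Finset V),
    (∀ i, UIndep G (f i)) ∧ (∀ i : Fin ℓ, UIsStep G (f i.castSucc) (f i.succ)) ∧
    f 0 = I ∧ f (Fin.last ℓ) = J

section MyAux
variable {A : V → V → Prop}

lemma my_arc_ne (hT : IsPolytree A) {a b : V} (h : A a b) : a ≠ b := by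
  rintro rfl; exact hT.1 a h

lemma my_arc_adj (hT : IsPolytree A) {a b : V} (h : A a b) : (underlying A).Adj a b := by
  rw [underlying, SimpleGraph.fromRel_adj]
  exact ⟨my_arc_ne hT h, Or.inl h⟩

lemma my_not_inCminus (hT : IsPolytree A) {a b : V} (h : A a b) : ¬ InCminus A a b b := by
  have hbr := (SimpleGraph.isAcyclic_iff_forall_adj_isBridge.mp hT.2.2.IsAcyclic)
    (my_arc_adj hT h)
  rw [SimpleGraph.isBridge_iff] at hbr
  exact hbr

lemma my_inCminus_iff (hT : IsPolytree A) {a b c d : V} (hab : A a b)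
    (hcd : (underlying A).Adj c d) (hne : s(c, d) ≠ s(a, b)) :
    (InCminus A a b c ↔ InCminus A a b d) := by
  have hadj : ((underlying A).deleteEdges {s(a, b)}).Adj c d := by
    rw [SimpleGraph.deleteEdges_adj]
    exact ⟨hcd, by simpa using hne⟩
  exact ⟨fun h => h.trans hadj.reachable, fun h => h.trans hadj.symm.reachable⟩

lemma my_filter_card_step [DecidableEq V] {S S' : Finset V} {c d : V}
    (h1 : S \ S' = {c}) (h2 : S' \ S = {d}) (P : V → Prop) [DecidablePred P] :
    ((S'.filter P).card : ℤ) =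
      (S.filter P).card + (if P d then 1 else 0) - (if P c then 1 else 0) := by
  have hx1 : ∀ x, (x ∈ S ∧ x ∉ S') ↔ x = c := fun x => by
    rw [← Finset.mem_sdiff, h1, Finset.mem_singleton]
  have hx2 : ∀ x, (x ∈ S' ∧ x ∉ S) ↔ x = d := fun x => by
    rw [← Finset.mem_sdiff, h2, Finset.mem_singleton]
  have hc : c ∈ S ∧ c ∉ S' := (hx1 c).mpr rfl
  have hd : d ∈ S' ∧ d ∉ S := (hx2 d).mpr rfl
  have hS' : S' = insert d (S.erase c) := by
    ext x
    simp only [Finset.mem_insert, Finset.mem_erase]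
    constructor
    · intro hx
      by_cases hxd : x = d
      · exact Or.inl hxd
      · refine Or.inr ⟨?_, ?_⟩
        · rintro rfl; exact hc.2 hx
        · by_contra hxS; exact hxd ((hx2 x).mp ⟨hx, hxS⟩)
    · rintro (rfl | ⟨hxc, hxS⟩)
      · exact hd.1
      · by_contra hxS'; exact hxc ((hx1 x).mp ⟨hxS, hxS'⟩)
  have hdne : d ∉ S.erase c := fun h => hd.2 (Finset.mem_of_mem_erase h)
  have herase : ((Finset.filter P (S.erase c)).card : ℤ) =
      (Finset.filter P S).card - (if P c then 1 else 0) := by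
    rw [Finset.filter_erase]
    by_cases hPc : P c
    · rw [if_pos hPc, Finset.cast_card_erase_of_mem (Finset.mem_filter.mpr ⟨hc.1, hPc⟩)]
    · rw [if_neg hPc, Finset.erase_eq_of_notMem (fun h => hPc (Finset.mem_filter.mp h).2)]
      ring
  rw [hS', Finset.filter_insert]
  by_cases hPd : P d
  · rw [if_pos hPd, Finset.card_insert_of_notMem (fun h => hdne (Finset.mem_of_mem_filter _ h))]
    push_cast
    rw [herase, if_pos hPd]
    ring
  · rw [if_neg hPd, herase, if_neg hPd]
    ring

end MyAux

section MyAux2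
variable [Fintype V] [DecidableEq V] {A : V → V → Prop}

/-- The set of step indices that slide a token along the arc `(a, b)`. -/
noncomputable def mySteps {ℓ : ℕ} (f : Fin (ℓ + 1) → Finset V) (a b : V) : Finset (Fin ℓ) :=
  Finset.univ.filter fun i =>
    f i.castSucc \ f i.succ = {a} ∧ f i.succ \ f i.castSucc = {b}

lemma my_wArc_eq_card (hT : IsPolytree A) {ℓ : ℕ} {f : Fin (ℓ + 1) → Finset V}
    (hf : IsReconfSeq A f) {a b : V} (hab : A a b) :
    wArc A (f 0) (f (Fin.last ℓ)) a b = ((mySteps f a b).card : ℤ) := by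
  set P : V → Prop := fun x => InCminus A a b x with hP
  set φ : ℕ → ℤ := fun n => (((f ⟨min n ℓ, by omega⟩).filter P).card : ℤ) with hφ
  have hterm : ∀ j : Fin ℓ,
      φ (j : ℕ) - φ ((j : ℕ) + 1) = (if j ∈ mySteps f a b then 1 else 0 : ℤ) := by
    intro j
    have hjl : (j : ℕ) < ℓ := j.isLt
    have e1 : (⟨min (j : ℕ) ℓ, by omega⟩ : Fin (ℓ + 1)) = j.castSucc := by
      apply Fin.ext; simp [Nat.min_eq_left hjl.le]
    have e2 : (⟨min ((j : ℕ) + 1) ℓ, by omega⟩ : Fin (ℓ + 1)) = j.succ := by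
      apply Fin.ext; simp [Nat.min_eq_left hjl]
    obtain ⟨c, d, hcd, h1, h2⟩ := hf.2 j
    have hstepcard := my_filter_card_step h1 h2 P
    have hmemiff : j ∈ mySteps f a b ↔ (c = a ∧ d = b) := by
      unfold mySteps
      simp only [Finset.mem_filter, Finset.mem_univ, true_and]
      constructor
      · rintro ⟨ha, hb⟩
        rw [h1] at ha; rw [h2] at hb
        exact ⟨Finset.singleton_injective ha, Finset.singleton_injective hb⟩
      · rintro ⟨rfl, rfl⟩; exact ⟨h1, h2⟩
    by_cases hcase : c = a ∧ d = b
    · obtain ⟨rfl, rfl⟩ := hcase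
      have hPc : P c := SimpleGraph.Reachable.refl _
      have hPd : ¬ P d := my_not_inCminus hT hab
      rw [if_pos (hmemiff.mpr ⟨rfl, rfl⟩)]
      simp only [hφ]
      rw [e1, e2, hstepcard, if_pos hPc, if_neg hPd]
      ring
    · have hsne : s(c, d) ≠ s(a, b) := by
        intro hs
        rcases Sym2.eq_iff.mp hs with ⟨rfl, rfl⟩ | ⟨rfl, rfl⟩
        · exact hcase ⟨rfl, rfl⟩
        · exact hT.2.1 _ _ hab hcd
      have hPiff : P c ↔ P d := my_inCminus_iff hT hab (my_arc_adj hT hcd) hsne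
      rw [if_neg (fun h => hcase (hmemiff.mp h))]
      simp only [hφ]
      rw [e1, e2, hstepcard]
      by_cases hPc : P c
      · rw [if_pos hPc, if_pos (hPiff.mp hPc)]; ring
      · rw [if_neg hPc, if_neg (fun h => hPc (hPiff.mpr h))]; ring
  have htel : ∑ i ∈ Finset.range ℓ, (φ i - φ (i + 1)) = φ 0 - φ ℓ :=
    Finset.sum_range_sub' φ ℓ
  have hsum1 : ∑ j : Fin ℓ, (φ (j : ℕ) - φ ((j : ℕ) + 1)) =
      ∑ i ∈ Finset.range ℓ, (φ i - φ (i + 1)) :=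
    Fin.sum_univ_eq_sum_range (fun i => φ i - φ (i + 1)) ℓ
  have hsum2 : ∑ j : Fin ℓ, (φ (j : ℕ) - φ ((j : ℕ) + 1)) =
      ((mySteps f a b).card : ℤ) := by
    rw [Finset.sum_congr rfl (fun j _ => hterm j), Finset.sum_boole]
    congr 2
    ext j
    simp [mySteps]
  have h0 : φ 0 = ((f 0).filter P).card := by
    have h00 : (⟨min 0 ℓ, by omega⟩ : Fin (ℓ + 1)) = 0 := Fin.ext (by simp)
    simp only [hφ, h00]
  have hl : φ ℓ = ((f (Fin.last ℓ)).filter P).card := by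
    have hll : (⟨min ℓ ℓ, by omega⟩ : Fin (ℓ + 1)) = Fin.last ℓ := Fin.ext (by simp [Fin.last])
    simp only [hφ, hll]
  rw [wArc, ← h0, ← hl, ← htel, ← hsum1, hsum2]
end MyAux2

section MyAux3
variable [Fintype V] [DecidableEq V] {A : V → V → Prop}

lemma my_blocking_struct (hT : IsPolytree A) {ℓ : ℕ} {f : Fin (ℓ + 1) → Finset V}
    (hf : IsReconfSeq A f) {u v : V}
    (hB : BlockingArc A (f 0) (f (Fin.last ℓ)) u v) :
    ∃ i₀ : Fin ℓ, i₀ ∈ mySteps f u v ∧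
      (∀ j : Fin (ℓ + 1), (j : ℕ) ≤ (i₀ : ℕ) → u ∈ f j ∧ v ∉ f j) ∧
      (∀ j : Fin (ℓ + 1), (i₀ : ℕ) < (j : ℕ) → v ∈ f j ∧ u ∉ f j) := by
  obtain ⟨hA, hw1, hw0⟩ := hB
  have hcard : (mySteps f u v).card = 1 := by
    have h := my_wArc_eq_card hT hf hA
    rw [hw1] at h
    exact_mod_cast h.symm
  obtain ⟨i₀, hi₀⟩ := Finset.card_eq_one.mp hcard
  have hmem : i₀ ∈ mySteps f u v := hi₀ ▸ Finset.mem_singleton_self i₀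
  have hstep := (Finset.mem_filter.mp hmem).2
  have hnostep : ∀ c d : V, A c d → (c, d) ≠ (u, v) →
      (c = u ∨ d = u ∨ c = v ∨ d = v) → mySteps f c d = ∅ := by
    intro c d h1 h2 h3
    have h := my_wArc_eq_card hT hf h1
    rw [hw0 c d h1 h2 h3] at h
    have h' : (mySteps f c d).card = 0 := by exact_mod_cast h.symm
    exact Finset.card_eq_zero.mp h'
  have hstepj : ∀ j : Fin ℓ, j ≠ i₀ →
      (u ∈ f j.succ ↔ u ∈ f j.castSucc) ∧ (v ∈ f j.succ ↔ v ∈ f j.castSucc) := by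
    intro j hj
    obtain ⟨c, d, hcd, h1, h2⟩ := hf.2 j
    have hjm : j ∈ mySteps f c d :=
      Finset.mem_filter.mpr ⟨Finset.mem_univ _, h1, h2⟩
    have hne : (c, d) ≠ (u, v) := by
      intro h
      have hc : c = u := congrArg Prod.fst h
      have hd : d = v := congrArg Prod.snd h
      subst hc; subst hd
      rw [hi₀] at hjm
      exact hj (Finset.mem_singleton.mp hjm)
    have hninc : ¬(c = u ∨ d = u ∨ c = v ∨ d = v) := by
      intro h3
      rw [hnostep c d hcd hne h3] at hjm
      exact absurd hjm (Finset.notMem_empty j)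
    push_neg at hninc
    obtain ⟨hcu, hdu, hcv, hdv⟩ := hninc
    constructor
    · constructor
      · intro h; by_contra h'
        have : u ∈ f j.succ \ f j.castSucc := Finset.mem_sdiff.mpr ⟨h, h'⟩
        rw [h2, Finset.mem_singleton] at this
        exact hdu this.symm
      · intro h; by_contra h'
        have : u ∈ f j.castSucc \ f j.succ := Finset.mem_sdiff.mpr ⟨h, h'⟩
        rw [h1, Finset.mem_singleton] at this
        exact hcu this.symm
    · constructor
      · intro h; by_contra h'
        have : v ∈ f j.succ \ f j.castSucc := Finset.mem_sdiff.mpr ⟨h, h'⟩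
        rw [h2, Finset.mem_singleton] at this
        exact hdv this.symm
      · intro h; by_contra h'
        have : v ∈ f j.castSucc \ f j.succ := Finset.mem_sdiff.mpr ⟨h, h'⟩
        rw [h1, Finset.mem_singleton] at this
        exact hcv this.symm
  have hu1 : u ∈ f i₀.castSucc := by
    have h : u ∈ f i₀.castSucc \ f i₀.succ := hstep.1 ▸ Finset.mem_singleton_self u
    exact (Finset.mem_sdiff.mp h).1
  have hu0 : u ∉ f i₀.succ := by
    have h : u ∈ f i₀.castSucc \ f i₀.succ := hstep.1 ▸ Finset.mem_singleton_self u
    exact (Finset.mem_sdiff.mp h).2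
  have hv1 : v ∈ f i₀.succ := by
    have h : v ∈ f i₀.succ \ f i₀.castSucc := hstep.2 ▸ Finset.mem_singleton_self v
    exact (Finset.mem_sdiff.mp h).1
  have hv0 : v ∉ f i₀.castSucc := by
    have h : v ∈ f i₀.succ \ f i₀.castSucc := hstep.2 ▸ Finset.mem_singleton_self v
    exact (Finset.mem_sdiff.mp h).2
  have keyup : ∀ dd : ℕ, ∀ j : Fin (ℓ + 1), (j : ℕ) + dd = (i₀ : ℕ) →
      u ∈ f j ∧ v ∉ f j := by
    intro dd
    induction dd with
    | zero =>
      intro j hj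
      have hje : j = i₀.castSucc := Fin.ext (by simpa using hj)
      rw [hje]; exact ⟨hu1, hv0⟩
    | succ n ih =>
      intro j hj
      have hlt : (j : ℕ) < ℓ := by have := i₀.isLt; omega
      set j' : Fin ℓ := ⟨(j : ℕ), hlt⟩ with hj'
      have hcs : j'.castSucc = j := Fin.ext rfl
      have hne : j' ≠ i₀ := by
        intro h
        have : (j' : ℕ) = (i₀ : ℕ) := congrArg Fin.val h
        simp [hj'] at this; omega
      have hih := ih j'.succ (by simp [Fin.val_succ, hj']; omega)
      obtain ⟨hiu, hiv⟩ := hstepj j' hne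
      rw [hcs] at hiu hiv
      exact ⟨hiu.mp hih.1, fun h => hih.2 (hiv.mpr h)⟩
  have keydown : ∀ dd : ℕ, ∀ j : Fin (ℓ + 1), (j : ℕ) = (i₀ : ℕ) + 1 + dd →
      v ∈ f j ∧ u ∉ f j := by
    intro dd
    induction dd with
    | zero =>
      intro j hj
      have hje : j = i₀.succ := Fin.ext (by simpa [Fin.val_succ] using hj)
      rw [hje]; exact ⟨hv1, hu0⟩
    | succ n ih =>
      intro j hj
      have hjl : (j : ℕ) ≤ ℓ := by have := j.isLt; omega
      have hlt : (i₀ : ℕ) + 1 + n < ℓ := by omega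
      set j' : Fin ℓ := ⟨(i₀ : ℕ) + 1 + n, hlt⟩ with hj'
      have e1 : j'.succ = j := Fin.ext (by simp [Fin.val_succ, hj']; omega)
      have hne : j' ≠ i₀ := by
        intro h
        have : (j' : ℕ) = (i₀ : ℕ) := congrArg Fin.val h
        simp [hj'] at this
        omega
      have hih := ih j'.castSucc (by simp [hj'])
      obtain ⟨hiu, hiv⟩ := hstepj j' hne
      rw [e1] at hiu hiv
      exact ⟨hiv.mpr hih.1, fun h => hih.2 (hiu.mp h)⟩
  refine ⟨i₀, hmem, fun j hj => keyup ((i₀ : ℕ) - (j : ℕ)) j (by omega),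
    fun j hj => keydown ((j : ℕ) - ((i₀ : ℕ) + 1)) j (by omega)⟩

end MyAux3

/-- In every reconfiguration sequence from `I⁰` to `Iᵗ`, the arcs
traversed by tokens that move exactly once are exactly the blocking arcs `B`;
moreover each `(u,v) ∈ B` has `u ∈ I⁰ \ Iᵗ` and `v ∈ Iᵗ \ I⁰`. -/
theorem stmt_7 [Fintype V] [DecidableEq V] (A : V → V → Prop) (hT : IsPolytree A)
    (I0 It : Finset V) (h0 : IndepF A I0) (ht : IndepF A It) (hcard : I0.card = It.card)
    {ℓ : ℕ} (f : Fin (ℓ + 1) → Finset V) (hf : IsReconfSeq A f)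
    (hstart : f 0 = I0) (hend : f (Fin.last ℓ) = It) :
    (∀ u v, A u v →
      ((∃ g : Fin (ℓ + 1) → V, IsTrajectory A f g ∧
          (Finset.univ.filter fun i : Fin ℓ => g i.succ ≠ g i.castSucc).card = 1 ∧
          ∃ i : Fin ℓ, g i.castSucc = u ∧ g i.succ = v) ↔
        BlockingArc A I0 It u v)) ∧
    ∀ u v, BlockingArc A I0 It u v → u ∈ I0 ∧ u ∉ It ∧ v ∈ It ∧ v ∉ I0 := by
  subst hstart; subst hend
  constructor
  · intro u v hA
    have huvne : u ≠ v := my_arc_ne hT hA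
    have hAdj := my_arc_adj hT hA
    constructor
    · rintro ⟨g, ⟨hgmem, hgstep⟩, hone, i, hiu, hiv⟩
      obtain ⟨i₀, hfil⟩ := Finset.card_eq_one.mp hone
      have hii : i = i₀ := by
        have hmemi : i ∈ Finset.univ.filter fun j : Fin ℓ => g j.succ ≠ g j.castSucc :=
          Finset.mem_filter.mpr ⟨Finset.mem_univ _, by rw [hiu, hiv]; exact huvne.symm⟩
        rw [hfil] at hmemi
        exact Finset.mem_singleton.mp hmemi
      subst hii
      have hstay : ∀ j : Fin ℓ, j ≠ i → g j.succ = g j.castSucc := by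
        intro j hj
        by_contra h
        have : j ∈ Finset.univ.filter fun j : Fin ℓ => g j.succ ≠ g j.castSucc :=
          Finset.mem_filter.mpr ⟨Finset.mem_univ _, h⟩
        rw [hfil] at this
        exact hj (Finset.mem_singleton.mp this)
      have hmove : f i.castSucc \ f i.succ = {u} ∧ f i.succ \ f i.castSucc = {v} := by
        rcases hgstep i with h | h
        · rw [hiu, hiv] at h; exact absurd h huvne.symm
        · rw [hiu, hiv] at h; exact h
      have keyU : ∀ dd : ℕ, ∀ j : Fin (ℓ + 1), (j : ℕ) + dd = (i : ℕ) → g j = u := by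
        intro dd
        induction dd with
        | zero =>
          intro j hj
          have hje : j = i.castSucc := Fin.ext (by simpa using hj)
          rw [hje]; exact hiu
        | succ n ih =>
          intro j hj
          have hlt : (j : ℕ) < ℓ := by have := i.isLt; omega
          set j' : Fin ℓ := ⟨(j : ℕ), hlt⟩ with hj'
          have hcs : j'.castSucc = j := Fin.ext rfl
          have hne : j' ≠ i := by
            intro h
            have : (j' : ℕ) = (i : ℕ) := congrArg Fin.val h
            simp [hj'] at this; omega
          have hih := ih j'.succ (by simp [Fin.val_succ, hj']; omega)
          rw [← hcs, ← hstay j' hne]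
          exact hih
      have keyV : ∀ dd : ℕ, ∀ j : Fin (ℓ + 1), (j : ℕ) = (i : ℕ) + 1 + dd → g j = v := by
        intro dd
        induction dd with
        | zero =>
          intro j hj
          have hje : j = i.succ := Fin.ext (by simpa [Fin.val_succ] using hj)
          rw [hje]; exact hiv
        | succ n ih =>
          intro j hj
          have hjl : (j : ℕ) ≤ ℓ := by have := j.isLt; omega
          have hlt : (i : ℕ) + 1 + n < ℓ := by omega
          set j' : Fin ℓ := ⟨(i : ℕ) + 1 + n, hlt⟩ with hj'
          have e1 : j'.succ = j := Fin.ext (by simp [Fin.val_succ, hj']; omega)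
          have hne : j' ≠ i := by
            intro h
            have : (j' : ℕ) = (i : ℕ) := congrArg Fin.val h
            simp [hj'] at this; omega
          have hih := ih j'.castSucc (by simp [hj'])
          rw [← e1, hstay j' hne]
          exact hih
      have memU : ∀ j : Fin (ℓ + 1), (j : ℕ) ≤ (i : ℕ) → u ∈ f j := by
        intro j hj
        have := hgmem j
        rwa [keyU ((i : ℕ) - (j : ℕ)) j (by omega)] at this
      have memV : ∀ j : Fin (ℓ + 1), (i : ℕ) < (j : ℕ) → v ∈ f j := by
        intro j hj
        have := hgmem j
        rwa [keyV ((j : ℕ) - ((i : ℕ) + 1)) j (by omega)] at this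
      refine ⟨hA, ?_, ?_⟩
      · rw [my_wArc_eq_card hT hf hA]
        have hsingle : mySteps f u v = {i} := by
          apply Finset.eq_singleton_iff_unique_mem.mpr
          refine ⟨Finset.mem_filter.mpr ⟨Finset.mem_univ _, hmove⟩, ?_⟩
          intro j hj
          obtain ⟨h1, h2⟩ := (Finset.mem_filter.mp hj).2
          by_contra hne
          have hvalne : (j : ℕ) ≠ (i : ℕ) := fun h => hne (Fin.ext h)
          rcases Nat.lt_or_ge (j : ℕ) (i : ℕ) with hlt | hge
          · have hmm : u ∈ f j.succ := memU j.succ (by simp [Fin.val_succ]; omega)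
            have hu' : u ∉ f j.succ :=
              (Finset.mem_sdiff.mp (h1 ▸ Finset.mem_singleton_self u)).2
            exact hu' hmm
          · have hgt : (i : ℕ) < (j : ℕ) := by omega
            have hv' : v ∈ f j.castSucc := memV j.castSucc (by simpa using hgt)
            have hu' : u ∈ f j.castSucc :=
              (Finset.mem_sdiff.mp (h1 ▸ Finset.mem_singleton_self u)).1
            exact hf.1 j.castSucc u hu' v hv' hAdj
        rw [hsingle]; simp
      · intro a b hab hne hinc
        rw [my_wArc_eq_card hT hf hab]
        have hempty : mySteps f a b = ∅ := by
          rw [Finset.eq_empty_iff_forall_notMem]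
          intro j hj
          obtain ⟨h1, h2⟩ := (Finset.mem_filter.mp hj).2
          have ha1 : a ∈ f j.castSucc :=
            (Finset.mem_sdiff.mp (h1 ▸ Finset.mem_singleton_self a)).1
          have ha2 : a ∉ f j.succ :=
            (Finset.mem_sdiff.mp (h1 ▸ Finset.mem_singleton_self a)).2
          have hb1 : b ∈ f j.succ :=
            (Finset.mem_sdiff.mp (h2 ▸ Finset.mem_singleton_self b)).1
          have hb2 : b ∉ f j.castSucc :=
            (Finset.mem_sdiff.mp (h2 ▸ Finset.mem_singleton_self b)).2
          rcases hinc with rfl | rfl | rfl | rfl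
          · -- a = u
            have hge : (a : V) = a := rfl
            have hgei : (i : ℕ) ≤ (j : ℕ) := by
              by_contra h
              push_neg at h
              exact ha2 (memU j.succ (by simp [Fin.val_succ]; omega))
            rcases eq_or_lt_of_le hgei with heq | hlt
            · have hji : j = i := Fin.ext heq.symm
              subst hji
              have hbv : b = v := Finset.singleton_injective (h2.symm.trans hmove.2)
              exact hne (by rw [hbv])
            · have hv' : v ∈ f j.castSucc := memV j.castSucc (by simpa using hlt)
              exact hf.1 j.castSucc a ha1 v hv' hAdj
          · -- b = u
            have hgt : (i : ℕ) < (j : ℕ) := by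
              by_contra h
              push_neg at h
              exact hb2 (memU j.castSucc (by simpa using h))
            have hv' : v ∈ f j.succ := memV j.succ (by simp [Fin.val_succ]; omega)
            exact hf.1 j.succ b hb1 v hv' hAdj
          · -- a = v
            have hle : (j : ℕ) + 1 ≤ (i : ℕ) := by
              by_contra h
              push_neg at h
              exact ha2 (memV j.succ (by simp [Fin.val_succ]; omega))
            have hu' : u ∈ f j.castSucc := memU j.castSucc (by simp; omega)
            exact hf.1 j.castSucc u hu' a ha1 hAdj
          · -- b = v
            have hle : (j : ℕ) ≤ (i : ℕ) := by
              by_contra h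
              push_neg at h
              exact hb2 (memV j.castSucc (by simpa using h))
            rcases eq_or_lt_of_le hle with heq | hlt
            · have hji : j = i := Fin.ext heq
              subst hji
              have hau : a = u := Finset.singleton_injective (h1.symm.trans hmove.1)
              exact hne (by rw [hau])
            · have hu' : u ∈ f j.succ := memU j.succ (by simp [Fin.val_succ]; omega)
              exact hf.1 j.succ u hu' b hb1 hAdj
        rw [hempty]; simp
    · intro hB
      obtain ⟨i₀, hmem, hup, hdown⟩ := my_blocking_struct hT hf hB
      obtain ⟨h1, h2⟩ := (Finset.mem_filter.mp hmem).2
      set g : Fin (ℓ + 1) → V := fun j => if (j : ℕ) ≤ (i₀ : ℕ) then u else v with hg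
      have hgval : ∀ j : Fin (ℓ + 1), g j = if (j : ℕ) ≤ (i₀ : ℕ) then u else v :=
        fun j => rfl
      have gcs : ∀ j : Fin ℓ, g j.castSucc = if (j : ℕ) ≤ (i₀ : ℕ) then u else v :=
        fun j => by rw [hgval]; simp
      have gsc : ∀ j : Fin ℓ, g j.succ = if (j : ℕ) + 1 ≤ (i₀ : ℕ) then u else v :=
        fun j => by rw [hgval]; simp [Fin.val_succ]
      refine ⟨g, ⟨?_, ?_⟩, ?_, i₀, ?_, ?_⟩
      · intro j
        rw [hgval j]
        by_cases hj : (j : ℕ) ≤ (i₀ : ℕ)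
        · rw [if_pos hj]; exact (hup j hj).1
        · rw [if_neg hj]; exact (hdown j (by omega)).1
      · intro j
        by_cases hj : j = i₀
        · subst hj
          right
          rw [gcs, gsc, if_pos (le_refl _), if_neg (by omega)]
          exact ⟨h1, h2⟩
        · left
          have hvalne : (j : ℕ) ≠ (i₀ : ℕ) := fun h => hj (Fin.ext h)
          rw [gcs, gsc]
          rcases lt_or_gt_of_ne hvalne with h | h
          · rw [if_pos (by omega), if_pos (by omega)]
          · rw [if_neg (by omega), if_neg (by omega)]
      · have hfil : (Finset.univ.filter fun j : Fin ℓ => g j.succ ≠ g j.castSucc) = {i₀} := by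
          ext j
          simp only [Finset.mem_filter, Finset.mem_univ, true_and, Finset.mem_singleton]
          rw [gcs, gsc]
          constructor
          · intro h
            by_contra hj
            apply h
            have hvalne : (j : ℕ) ≠ (i₀ : ℕ) := fun h' => hj (Fin.ext h')
            rcases lt_or_gt_of_ne hvalne with h' | h'
            · rw [if_pos (by omega), if_pos (by omega)]
            · rw [if_neg (by omega), if_neg (by omega)]
          · rintro rfl
            rw [if_pos (le_refl _), if_neg (by omega)]
            exact (my_arc_ne hT hB.1).symm
        rw [hfil, Finset.card_singleton]
      · rw [gcs, if_pos (le_refl _)]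
      · rw [gsc, if_neg (by omega)]
  · intro u v hB
    obtain ⟨i₀, hmem, hup, hdown⟩ := my_blocking_struct hT hf hB
    have h0' : (((0 : Fin (ℓ + 1)) : ℕ)) ≤ (i₀ : ℕ) := by simp
    have hl' : (i₀ : ℕ) < ((Fin.last ℓ : Fin (ℓ + 1)) : ℕ) := by
      simpa [Fin.last] using i₀.isLt
    exact ⟨(hup 0 h0').1, (hdown _ hl').2, (hdown _ hl').1, (hup 0 h0').2⟩
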